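/- Let (c_n) and (e_n) be sequences of real numbers with 1 + c_n > 0 for all n and (1+c_n)(1+e_n) = 1 for all n. Then the following three series converge or diverge simultaneously: ∑ ((1+e_n)^{1/2} − (1+e_n)^{−1/2})², ∑ c_n², and ∑ e_n². -/

import Mathlib

open Filter

lemma aux_summable_of_eventually_le {f g : ℕ → ℝ} (hf : ∀ n, 0 ≤ f n)
    (hg : Summable g) (h : ∀ᶠ n in atTop, f n ≤ g n) : Summable f := by
  obtain ⟨N, hN⟩ := eventually_atTop.mp h
  rw [← summable_nat_add_iff N]
  exact Summable.of_nonneg_of_le (fun n => hf _)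
    (fun n => hN (n + N) (Nat.le_add_left N n))
    ((summable_nat_add_iff N).mpr hg)

lemma aux_tendsto_zero_of_sq {c : ℕ → ℝ} (h : Summable (fun n => c n ^ 2)) :
    Tendsto c atTop (nhds 0) := by
  have h0 := h.tendsto_atTop_zero
  have habs : Tendsto (fun n => |c n|) atTop (nhds 0) := by
    have : Tendsto (fun n => Real.sqrt (c n ^ 2)) atTop (nhds (Real.sqrt 0)) :=
      (Real.continuous_sqrt.tendsto 0).comp h0
    simpa [Real.sqrt_sq_eq_abs] using this
  exact (tendsto_zero_iff_abs_tendsto_zero c).mpr habs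

theorem stmt_2 (c e : ℕ → ℝ) (hc : ∀ n, 1 + c n > 0)
    (hce : ∀ n, (1 + c n) * (1 + e n) = 1) :
    (Summable (fun n => (Real.sqrt (1 + e n) - (Real.sqrt (1 + e n))⁻¹) ^ 2) ↔
      Summable (fun n => (c n) ^ 2)) ∧
    (Summable (fun n => (c n) ^ 2) ↔ Summable (fun n => (e n) ^ 2)) := by
  set a : ℕ → ℝ := fun n => 1 + c n with ha_def
  have hca : ∀ n, a n = 1 + c n := fun n => by rw [ha_def]
  clear_value a
  have ha : ∀ n, 0 < a n := fun n => by rw [hca]; exact hc n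
  have hinv : ∀ n, 1 + e n = (a n)⁻¹ := by
    intro n
    rw [hca]
    exact (inv_eq_of_mul_eq_one_right (hce n)).symm
  have he : ∀ n, e n = -(c n) / a n := by
    intro n
    have h := hinv n
    have h2 : e n = (a n)⁻¹ - 1 := by linarith
    rw [h2, inv_eq_one_div]
    rw [div_sub' (ha n).ne', hca]
    congr 1
    ring
  -- first series term equals c n ^ 2 / a n
  have hterm1 : ∀ n, (Real.sqrt (1 + e n) - (Real.sqrt (1 + e n))⁻¹) ^ 2
      = c n ^ 2 / a n := by
    intro n
    rw [hinv n, Real.sqrt_inv, inv_inv]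
    have hs : 0 < Real.sqrt (a n) := Real.sqrt_pos.mpr (ha n)
    have hsq : Real.sqrt (a n) ^ 2 = a n := Real.sq_sqrt (ha n).le
    have h1 : (Real.sqrt (a n))⁻¹ - Real.sqrt (a n)
        = (1 - a n) / Real.sqrt (a n) := by
      field_simp
      nlinarith [hsq]
    rw [h1, div_pow, hsq, hca]
    congr 1
    ring
  have hterm3 : ∀ n, e n ^ 2 = c n ^ 2 / a n ^ 2 := by
    intro n
    rw [he n]
    ring
  -- S1 ↔ S2
  have h12 : Summable (fun n => c n ^ 2 / a n) ↔ Summable (fun n => c n ^ 2) := by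
    constructor
    · intro h
      have h0 : Tendsto (fun n => c n ^ 2 / a n) atTop (nhds 0) :=
        h.tendsto_atTop_zero
      have hev : ∀ᶠ n in atTop, c n ^ 2 / a n < 1/2 :=
        h0.eventually (eventually_lt_nhds (by norm_num))
      refine aux_summable_of_eventually_le (fun n => sq_nonneg _)
        (h.mul_left 2) ?_
      filter_upwards [hev] with n hn
      have han := ha n
      have hcan := hca n
      have hlt : c n ^ 2 < a n / 2 := by
        rw [div_lt_iff₀ han] at hn; linarith
      have ha2 : a n < 2 := by nlinarith [sq_nonneg (a n - 2)]
      have : 2 * (c n ^ 2 / a n) = 2 * c n ^ 2 / a n := by ring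
      rw [this, le_div_iff₀ han]
      nlinarith [sq_nonneg (c n)]
    · intro h
      have h0 := aux_tendsto_zero_of_sq h
      have hev : ∀ᶠ n in atTop, |c n| < 1/2 :=
        (h0.eventually (eventually_abs_sub_lt 0 (by norm_num : (0:ℝ) < 1/2))).mono
          (by intro n hn; simpa using hn)
      refine aux_summable_of_eventually_le
        (fun n => div_nonneg (sq_nonneg _) (ha n).le) (h.mul_left 2) ?_
      filter_upwards [hev] with n hn
      have han := ha n
      have h1 : 1/2 < a n := by
        have h2 := abs_lt.mp hn; rw [hca]; linarith [h2.1]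
      rw [div_le_iff₀ han]
      nlinarith [mul_nonneg (sq_nonneg (c n)) (by linarith : (0:ℝ) ≤ 2 * a n - 1)]
  have h23 : Summable (fun n => c n ^ 2) ↔ Summable (fun n => c n ^ 2 / a n ^ 2) := by
    constructor
    · intro h
      have h0 := aux_tendsto_zero_of_sq h
      have hev : ∀ᶠ n in atTop, |c n| < 1/2 :=
        (h0.eventually (eventually_abs_sub_lt 0 (by norm_num : (0:ℝ) < 1/2))).mono
          (by intro n hn; simpa using hn)
      refine aux_summable_of_eventually_le
        (fun n => div_nonneg (sq_nonneg _) (sq_nonneg _)) (h.mul_left 4) ?_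
      filter_upwards [hev] with n hn
      have han := ha n
      have h1 : 1/2 < a n := by
        have h2 := abs_lt.mp hn; rw [hca]; linarith [h2.1]
      rw [div_le_iff₀ (by positivity : (0:ℝ) < a n ^ 2)]
      nlinarith [mul_nonneg (sq_nonneg (c n))
        (by nlinarith : (0:ℝ) ≤ 4 * a n ^ 2 - 1)]
    · intro h
      have heq : (fun n => e n ^ 2) = fun n => c n ^ 2 / a n ^ 2 :=
        funext hterm3
      have hE : Summable (fun n => e n ^ 2) := heq ▸ h
      have h0 := aux_tendsto_zero_of_sq hE
      have hev : ∀ᶠ n in atTop, |e n| < 1/2 :=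
        (h0.eventually (eventually_abs_sub_lt 0 (by norm_num : (0:ℝ) < 1/2))).mono
          (by intro n hn; simpa using hn)
      refine aux_summable_of_eventually_le (fun n => sq_nonneg _)
        (h.mul_left 4) ?_
      filter_upwards [hev] with n hn
      have han := ha n
      have h1 : a n ≤ 2 := by
        have h2 := abs_lt.mp hn
        have h3 : (1:ℝ)/2 < 1 + e n := by linarith [h2.1]
        have h4 : a n * (1 + e n) = 1 := by rw [hca]; exact hce n
        nlinarith
      have : 4 * (c n ^ 2 / a n ^ 2) = 4 * c n ^ 2 / a n ^ 2 := by ring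
      rw [this, le_div_iff₀ (by positivity : (0:ℝ) < a n ^ 2)]
      nlinarith [mul_nonneg (sq_nonneg (c n))
        (by nlinarith : (0:ℝ) ≤ 4 - a n ^ 2)]
  constructor
  · rw [show (fun n => (Real.sqrt (1 + e n) - (Real.sqrt (1 + e n))⁻¹) ^ 2)
        = fun n => c n ^ 2 / a n from funext hterm1]
    exact h12
  · rw [show (fun n => e n ^ 2) = fun n => c n ^ 2 / a n ^ 2 from funext hterm3]
    exact h23
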